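/- Let b be a nonzero rational number and let g_b : ℚ → ℚ be given by g_b(z) = −(z + b/z). If a nonzero z ∈ ℚ is a periodic point of g_b (i.e. g_b^[n](z) = z for some n ≥ 1), then z is a fixed point: g_b(z) = z. (In the paper's formulation on P¹: every rational periodic point of z ↦ −(z + b/z) is a fixed point; in particular there are no rational points of exact period 2, 3, or 4.) -/

import Mathlib

/-- A nonzero rational whose `p`-adic valuation vanishes for every prime `p`
is `1` or `-1`. -/
lemma rat_eq_one_or_neg_one_of_padicValRat_eq_zero (r : ℚ) (hr : r ≠ 0)
    (h : ∀ p : ℕ, p.Prime → padicValRat p r = 0) : r = 1 ∨ r = -1 := by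
  have hnum0 : r.num ≠ 0 := Rat.num_ne_zero.2 hr
  have hden : r.den = 1 := by
    by_contra hd
    obtain ⟨p, hp, hdvd⟩ := Nat.exists_prime_and_dvd hd
    haveI := Fact.mk hp
    have h1 : 1 ≤ padicValNat p r.den := one_le_padicValNat_of_dvd r.pos.ne' hdvd
    have h2 : padicValInt p r.num = padicValNat p r.den := by
      have := h p hp
      rw [padicValRat_def] at this
      omega
    have h3 : p ∣ r.num.natAbs := by
      apply dvd_of_one_le_padicValNat
      rw [show padicValNat p r.num.natAbs = padicValInt p r.num from rfl, h2]
      exact h1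
    have : p ∣ 1 := r.reduced ▸ Nat.dvd_gcd h3 hdvd
    exact hp.one_lt.ne' (Nat.dvd_one.mp this)
  have hnum : r.num.natAbs = 1 := by
    by_contra hd
    obtain ⟨p, hp, hdvd⟩ := Nat.exists_prime_and_dvd hd
    haveI := Fact.mk hp
    have h1 : 1 ≤ padicValNat p r.num.natAbs :=
      one_le_padicValNat_of_dvd (Int.natAbs_pos.mpr hnum0).ne' hdvd
    have h2 : padicValInt p r.num = padicValNat p r.den := by
      have := h p hp
      rw [padicValRat_def] at this
      omega
    have h3 : p ∣ r.den := by
      apply dvd_of_one_le_padicValNat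
      rw [← h2]
      exact h1
    have : p ∣ 1 := r.reduced ▸ Nat.dvd_gcd hdvd h3
    exact hp.one_lt.ne' (Nat.dvd_one.mp this)
  have hr' : r = (r.num : ℚ) := by
    conv_lhs => rw [← Rat.num_div_den r]
    rw [hden]
    simp
  rcases Int.natAbs_eq_iff.mp hnum with h | h
  · left; rw [hr', h]; norm_num
  · right; rw [hr', h]; norm_num

/-- Every nonzero rational periodic point of `z ↦ -(z + b/z)` (with `b ∈ ℚ*`)
is a fixed point. -/
theorem periodic_points_neg (b : ℚ) (hb : b ≠ 0) (z : ℚ) (hz : z ≠ 0)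
    (n : ℕ) (hn : 1 ≤ n) (hper : (fun w : ℚ => -(w + b / w))^[n] z = z) :
    -(z + b / z) = z := by
  set g : ℚ → ℚ := fun w => -(w + b / w) with hgdef
  have hg0 : g 0 = 0 := by simp [hgdef]
  -- every point of the orbit is nonzero
  have hZ : ∀ k, g^[k] z ≠ 0 := by
    intro k hk
    apply hz
    have h1 : ∀ j, g^[k + j] z = 0 := by
      intro j
      rw [add_comm, Function.iterate_add_apply, hk, Function.iterate_fixed hg0]
    have hkle : k ≤ n * (k + 1) := le_trans (Nat.le_succ k) (Nat.le_mul_of_pos_left (k + 1) hn)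
    have h2 : g^[n * (k + 1)] z = z := by
      rw [Function.iterate_mul]
      exact Function.iterate_fixed hper (k + 1)
    calc z = g^[n * (k + 1)] z := h2.symm
      _ = g^[k + (n * (k + 1) - k)] z := by rw [Nat.add_sub_cancel' hkle]
      _ = 0 := h1 _
  set u : ℕ → ℚ := fun k => (g^[k] z) ^ 2 with hudef
  have hu0 : ∀ k, u k ≠ 0 := fun k => pow_ne_zero 2 (hZ k)
  have hustep : ∀ k, g^[k + 1] z = -((g^[k] z) ^ 2 + b) / (g^[k] z) := by
    intro k
    rw [Function.iterate_succ_apply']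
    show -(g^[k] z + b / g^[k] z) = _
    have hw := hZ k
    field_simp
  have hub : ∀ k, u k + b ≠ 0 := by
    intro k h
    apply hZ (k + 1)
    rw [hustep k]
    have : (g^[k] z) ^ 2 + b = 0 := h
    rw [this]
    simp
  have hurec : ∀ k, u (k + 1) = (u k + b) ^ 2 / u k := by
    intro k
    have hw := hZ k
    show (g^[k + 1] z) ^ 2 = ((g^[k] z) ^ 2 + b) ^ 2 / (g^[k] z) ^ 2
    rw [hustep k]
    field_simp
  have huper : ∀ k, u (k + n) = u k := by
    intro k
    show (g^[k + n] z) ^ 2 = (g^[k] z) ^ 2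
    rw [Function.iterate_add_apply, hper]
  -- key valuation fact
  have key : ∀ p : ℕ, p.Prime → padicValRat p (u 0 + b) = padicValRat p (u 0) := by
    intro p hp
    haveI := Fact.mk hp
    set β := padicValRat p b with hβ
    set a : ℕ → ℤ := fun k => padicValRat p (u k) with hadef
    have harec : ∀ k, a (k + 1) = 2 * padicValRat p (u k + b) - a k := by
      intro k
      show padicValRat p (u (k + 1)) = _
      rw [hurec k, padicValRat.div (pow_ne_zero 2 (hub k)) (hu0 k),
        padicValRat.pow (u k + b)]
      push_cast
      ring
    have hlow : ∀ k, a k < β → a (k + 1) = a k := by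
      intro k h
      have hv : padicValRat p (u k + b) = a k :=
        padicValRat.add_eq_of_lt (hub k) (hu0 k) hb h
      rw [harec k, hv]
      ring
    have haper : ∀ k s, a (k + n * s) = a k := by
      intro k s
      induction s with
      | zero => simp
      | succ s ih =>
        have : k + n * (s + 1) = (k + n * s) + n := by ring
        rw [this]
        show padicValRat p (u ((k + n * s) + n)) = _
        rw [huper]
        exact ih
    -- a is constant
    have hconst : ∀ k, a k = a 0 := by
      by_cases hex : ∃ j, a j < β
      · obtain ⟨j, hj⟩ := hex
        have hcl : ∀ m, a (j + m) = a j := by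
          intro m
          induction m with
          | zero => rfl
          | succ m ih =>
            have : j + (m + 1) = (j + m) + 1 := by ring
            rw [this, hlow (j + m) (ih ▸ hj), ih]
        have hall : ∀ m, a m = a j := by
          intro m
          have h1 : j ≤ m + n * j := le_trans (Nat.le_mul_of_pos_left j hn) (Nat.le_add_left _ _)
          calc a m = a (m + n * j) := (haper m j).symm
            _ = a (j + (m + n * j - j)) := by rw [Nat.add_sub_cancel' h1]
            _ = a j := hcl _
        intro k
        rw [hall k, hall 0]
      · push_neg at hex
        have hallβ : ∀ k, a k = β := by
          intro k
          refine le_antisymm ?_ (hex k)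
          by_contra h
          push_neg at h
          have hv : padicValRat p (u k + b) = β := by
            rw [show u k + b = b + u k from add_comm _ _]
            exact padicValRat.add_eq_of_lt (by rw [add_comm]; exact hub k) hb (hu0 k) h
          have := harec k
          rw [hv] at this
          have h2 := hex (k + 1)
          omega
        intro k
        rw [hallβ k, hallβ 0]
    -- conclude from the recurrence at 0
    have h1 : a 1 = 2 * padicValRat p (u 0 + b) - a 0 := harec 0
    have h2 : a 1 = a 0 := hconst 1
    have : padicValRat p (u 0 + b) = a 0 := by omega
    exact this
  -- the ratio (u 0 + b) / u 0 is ±1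
  set r : ℚ := (u 0 + b) / u 0 with hrdef
  have hrne : r ≠ 0 := div_ne_zero (hub 0) (hu0 0)
  have hrval : ∀ p : ℕ, p.Prime → padicValRat p r = 0 := by
    intro p hp
    haveI := Fact.mk hp
    rw [hrdef, padicValRat.div (hub 0) (hu0 0), key p hp, sub_self]
  have hu0z : u 0 = z ^ 2 := by
    show (g^[0] z) ^ 2 = z ^ 2
    simp
  rcases rat_eq_one_or_neg_one_of_padicValRat_eq_zero r hrne hrval with h | h
  · exfalso
    apply hb
    have := (div_eq_one_iff_eq (hu0 0)).mp h
    linarith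
  · have heq : u 0 + b = -(u 0) := by
      have := (div_eq_iff (hu0 0)).mp h
      linarith
    rw [hu0z] at heq
    field_simp
    linarith
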